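/- Let V^{•,•} be a Z²-graded vector space over a field K with two anticommuting square-zero endomorphisms δ₁ of bidegree (1,0) and δ₂ of bidegree (0,1), such that for i = 1,2 the δᵢ-cohomology of the associated total complex is finite dimensional in each degree. Then for every j ∈ Z: dim H^j_{BC}(V) + dim H^j_A(V) ≥ dim H^j_{δ₁}(V) + dim H^j_{δ₂}(V), where H_{BC} = (Ker δ₁ ∩ Ker δ₂)/Im(δ₁δ₂) and H_A = Ker(δ₁δ₂)/(Im δ₁ + Im δ₂). -/

import Mathlib

open LinearMap

/-- The (cardinal) dimension of the quotient `A / (A ∩ B)` of submodules,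
used to express cohomology in a fixed (total) degree: e.g. the Bott-Chern
cohomology in degree `j` is `(Ker δ₁ ∩ Ker δ₂ ∩ V^j) / Im(δ₁δ₂)`. -/
noncomputable def qrank {K V : Type*} [Field K] [AddCommGroup V] [Module K V]
    (A B : Submodule K V) : Cardinal :=
  Module.rank K (↥A ⧸ B.comap A.subtype)

/-- The total-degree-`j` piece `V^j = ⨁_{p+q=j} V^{p,q}` of a `ℤ²`-graded space. -/
def totalPiece {K V : Type*} [Field K] [AddCommGroup V] [Module K V]
    (𝒱 : ℤ × ℤ → Submodule K V) (j : ℤ) : Submodule K V :=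
  ⨆ p : ℤ, 𝒱 (p, j - p)

section FTproj

variable {K V : Type*} [Field K] [AddCommGroup V] [Module K V]
  (𝒱 : ℤ × ℤ → Submodule K V) (hinternal : DirectSum.IsInternal 𝒱)

/-- Projection onto the total-degree-`j` part. -/
noncomputable def FTproj (j : ℤ) : V →ₗ[K] V :=
  (DirectSum.toModule K (ℤ × ℤ) V
      (fun i => if i.1 + i.2 = j then (𝒱 i).subtype else 0)) ∘ₗ
    (LinearEquiv.ofBijective (DirectSum.coeLinearMap 𝒱) hinternal).symm.toLinearMap

lemma FT_symm_of {i : ℤ × ℤ} {x : V} (hx : x ∈ 𝒱 i) :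
    (LinearEquiv.ofBijective (DirectSum.coeLinearMap 𝒱) hinternal).symm x
      = DirectSum.of (fun i => ↥(𝒱 i)) i ⟨x, hx⟩ := by
  rw [LinearEquiv.symm_apply_eq]
  exact (DirectSum.coeLinearMap_of 𝒱 i ⟨x, hx⟩).symm

lemma FTproj_of_mem (j : ℤ) {i : ℤ × ℤ} {x : V} (hx : x ∈ 𝒱 i) :
    FTproj 𝒱 hinternal j x = if i.1 + i.2 = j then x else 0 := by
  unfold FTproj
  rw [LinearMap.comp_apply, LinearEquiv.coe_coe, FT_symm_of 𝒱 hinternal hx,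
    ← DirectSum.lof_eq_of K, DirectSum.toModule_lof]
  split <;> simp

lemma FTproj_mem (j : ℤ) (x : V) : FTproj 𝒱 hinternal j x ∈ totalPiece 𝒱 j := by
  have hx : x ∈ (⊤ : Submodule K V) := trivial
  rw [← hinternal.submodule_iSup_eq_top] at hx
  refine Submodule.iSup_induction 𝒱
    (motive := fun y => FTproj 𝒱 hinternal j y ∈ totalPiece 𝒱 j) hx ?_ ?_ ?_
  · intro i y hy
    rw [FTproj_of_mem 𝒱 hinternal j hy]
    split
    · rename_i h
      refine Submodule.mem_iSup_of_mem i.1 ?_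
      obtain ⟨p, q⟩ := i
      have h' : p + q = j := h
      show y ∈ 𝒱 (p, j - p)
      rw [show j - p = q by omega]
      exact hy
    · exact Submodule.zero_mem _
  · simp
  · intro y z hy hz
    rw [map_add]
    exact Submodule.add_mem _ hy hz

lemma FTproj_id (j : ℤ) {x : V} (hx : x ∈ totalPiece 𝒱 j) :
    FTproj 𝒱 hinternal j x = x := by
  refine Submodule.iSup_induction (fun p : ℤ => 𝒱 (p, j - p))
    (motive := fun y => FTproj 𝒱 hinternal j y = y) hx ?_ ?_ ?_
  · intro p y hy
    rw [FTproj_of_mem 𝒱 hinternal j hy, if_pos (show (p, j - p).1 + (p, j - p).2 = j by simp)]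
  · simp
  · intro y z hy hz
    rw [map_add, hy, hz]

lemma FTproj_comm (j : ℤ) (δ : V →ₗ[K] V) (σ : ℤ × ℤ → ℤ × ℤ)
    (hσ : ∀ i : ℤ × ℤ, (σ i).1 + (σ i).2 = i.1 + i.2 + 1)
    (hδ : ∀ i : ℤ × ℤ, ∀ x ∈ 𝒱 i, δ x ∈ 𝒱 (σ i)) (x : V) :
    FTproj 𝒱 hinternal j (δ x) = δ (FTproj 𝒱 hinternal (j - 1) x) := by
  have hx : x ∈ (⊤ : Submodule K V) := trivial
  rw [← hinternal.submodule_iSup_eq_top] at hx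
  refine Submodule.iSup_induction 𝒱
    (motive := fun y => FTproj 𝒱 hinternal j (δ y) = δ (FTproj 𝒱 hinternal (j - 1) y))
    hx ?_ ?_ ?_
  · intro i y hy
    rw [FTproj_of_mem 𝒱 hinternal j (hδ i y hy), FTproj_of_mem 𝒱 hinternal (j - 1) hy]
    have h1 := hσ i
    by_cases h : i.1 + i.2 = j - 1
    · rw [if_pos (by omega), if_pos h]
    · rw [if_neg (by omega), if_neg h, map_zero]
  · simp
  · intro y z hy hz
    simp only [map_add, hy, hz]

end FTproj

/- STATEMENT 5: Frölicher-type inequality for a ℤ²-graded vector space with two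
anticommuting square-zero endomorphisms δ₁ (bidegree (1,0)) and δ₂ (bidegree (0,1))
having finite dimensional δᵢ-cohomology in each total degree:
dim H^j_BC + dim H^j_A ≥ dim H^j_{δ₁} + dim H^j_{δ₂} for all j. -/
theorem frolicher_type_inequality_bigraded
    {K V : Type*} [Field K] [AddCommGroup V] [Module K V]
    (𝒱 : ℤ × ℤ → Submodule K V) (hinternal : DirectSum.IsInternal 𝒱)
    (δ₁ δ₂ : V →ₗ[K] V)
    (hδ₁deg : ∀ p q : ℤ, ∀ x ∈ 𝒱 (p, q), δ₁ x ∈ 𝒱 (p + 1, q))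
    (hδ₂deg : ∀ p q : ℤ, ∀ x ∈ 𝒱 (p, q), δ₂ x ∈ 𝒱 (p, q + 1))
    (h1 : δ₁ ∘ₗ δ₁ = 0) (h2 : δ₂ ∘ₗ δ₂ = 0) (h12 : δ₁ ∘ₗ δ₂ + δ₂ ∘ₗ δ₁ = 0)
    (hfin : ∀ j : ℤ,
      qrank (ker δ₁ ⊓ totalPiece 𝒱 j) (range δ₁) < Cardinal.aleph0 ∧
      qrank (ker δ₂ ⊓ totalPiece 𝒱 j) (range δ₂) < Cardinal.aleph0) :
    ∀ j : ℤ,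
      qrank (ker δ₁ ⊓ totalPiece 𝒱 j) (range δ₁) +
          qrank (ker δ₂ ⊓ totalPiece 𝒱 j) (range δ₂) ≤
        qrank (ker δ₁ ⊓ ker δ₂ ⊓ totalPiece 𝒱 j) (range (δ₁ ∘ₗ δ₂)) +
          qrank (ker (δ₁ ∘ₗ δ₂) ⊓ totalPiece 𝒱 j) (range δ₁ ⊔ range δ₂) := by
  classical
  intro j
  -- anticommutation, pointwise
  have hanti : ∀ x : V, δ₁ (δ₂ x) = - δ₂ (δ₁ x) := by
    intro x
    have := DFunLike.congr_fun h12 x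
    simp only [LinearMap.add_apply, LinearMap.comp_apply, LinearMap.zero_apply] at this
    exact eq_neg_of_add_eq_zero_left this
  have hsq1 : ∀ x : V, δ₁ (δ₁ x) = 0 := by
    intro x
    have := DFunLike.congr_fun h1 x
    simpa using this
  have hsq2 : ∀ x : V, δ₂ (δ₂ x) = 0 := by
    intro x
    have := DFunLike.congr_fun h2 x
    simpa using this
  set Wj := totalPiece 𝒱 j with hWj
  set A1 : Submodule K V := ker δ₁ ⊓ Wj with hA1
  set A2 : Submodule K V := ker δ₂ ⊓ Wj with hA2
  set ABC : Submodule K V := ker δ₁ ⊓ ker δ₂ ⊓ Wj with hABC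
  set AA : Submodule K V := ker (δ₁ ∘ₗ δ₂) ⊓ Wj with hAA
  -- inclusions of submodules
  have hA1AA : A1 ≤ AA := by
    rintro x ⟨hk, hw⟩
    have hk' : δ₁ x = 0 := hk
    refine ⟨LinearMap.mem_ker.mpr ?_, hw⟩
    show δ₁ (δ₂ x) = 0
    rw [hanti, hk', map_zero, neg_zero]
  have hA2AA : A2 ≤ AA := by
    rintro x ⟨hk, hw⟩
    have hk' : δ₂ x = 0 := hk
    refine ⟨LinearMap.mem_ker.mpr ?_, hw⟩
    show δ₁ (δ₂ x) = 0
    rw [hk', map_zero]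
  have hBC1 : ABC ≤ A1 := by
    rintro x ⟨⟨hk1, hk2⟩, hw⟩
    exact ⟨hk1, hw⟩
  have hBC2 : ABC ≤ A2 := by
    rintro x ⟨⟨hk1, hk2⟩, hw⟩
    exact ⟨hk2, hw⟩
  -- the quotient modules
  let N1 : Submodule K ↥A1 := (range δ₁).comap A1.subtype
  let N2 : Submodule K ↥A2 := (range δ₂).comap A2.subtype
  let NBC : Submodule K ↥ABC := (range (δ₁ ∘ₗ δ₂)).comap ABC.subtype
  let NA : Submodule K ↥AA := (range δ₁ ⊔ range δ₂).comap AA.subtype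
  -- the maps
  let g1 : (↥A1 ⧸ N1) →ₗ[K] (↥AA ⧸ NA) :=
    Submodule.mapQ _ _ (Submodule.inclusion hA1AA) (by
      intro x hx
      simp only [N1, NA, Submodule.mem_comap, Submodule.coe_subtype,
        Submodule.coe_inclusion] at hx ⊢
      exact Submodule.mem_sup_left hx)
  let g2 : (↥A2 ⧸ N2) →ₗ[K] (↥AA ⧸ NA) :=
    Submodule.mapQ _ _ (Submodule.inclusion hA2AA) (by
      intro x hx
      simp only [N2, NA, Submodule.mem_comap, Submodule.coe_subtype,
        Submodule.coe_inclusion] at hx ⊢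
      exact Submodule.mem_sup_right hx)
  let f1 : (↥ABC ⧸ NBC) →ₗ[K] (↥A1 ⧸ N1) :=
    Submodule.mapQ _ _ (Submodule.inclusion hBC1) (by
      intro x hx
      simp only [NBC, N1, Submodule.mem_comap, Submodule.coe_subtype,
        Submodule.coe_inclusion] at hx ⊢
      obtain ⟨y, hy⟩ := hx
      exact ⟨δ₂ y, hy⟩)
  let f2 : (↥ABC ⧸ NBC) →ₗ[K] (↥A2 ⧸ N2) :=
    Submodule.mapQ _ _ (Submodule.inclusion hBC2) (by
      intro x hx
      simp only [NBC, N2, Submodule.mem_comap, Submodule.coe_subtype,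
        Submodule.coe_inclusion] at hx ⊢
      obtain ⟨y, hy⟩ := hx
      refine ⟨-δ₁ y, ?_⟩
      rw [map_neg, ← hanti]
      simpa using hy)
  let g : (↥A1 ⧸ N1) × (↥A2 ⧸ N2) →ₗ[K] (↥AA ⧸ NA) := g1.coprod (-g2)
  let f : (↥ABC ⧸ NBC) →ₗ[K] (↥A1 ⧸ N1) × (↥A2 ⧸ N2) := f1.prod f2
  -- key exactness: ker g ≤ range f
  have hker : ker g ≤ range f := by
    rintro ⟨q1, q2⟩ hq
    obtain ⟨a, rfl⟩ := Submodule.Quotient.mk_surjective _ q1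
    obtain ⟨b, rfl⟩ := Submodule.Quotient.mk_surjective _ q2
    have hab : (a : V) - (b : V) ∈ range δ₁ ⊔ range δ₂ := by
      have hq' : g1 (Submodule.Quotient.mk a) = g2 (Submodule.Quotient.mk b) := by
        have := LinearMap.mem_ker.mp hq
        simp only [g, LinearMap.coprod_apply, LinearMap.neg_apply] at this
        exact add_neg_eq_zero.mp this
      simp only [g1, g2, Submodule.mapQ_apply] at hq'
      have := (Submodule.Quotient.eq NA).mp hq'
      simpa only [NA, Submodule.mem_comap, Submodule.coe_subtype,
        AddSubgroupClass.coe_sub, Submodule.coe_inclusion] using this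
    obtain ⟨y, ⟨u, hu⟩, z, ⟨v, hv⟩, huv⟩ := Submodule.mem_sup.mp hab
    subst hu hv
    -- project u and v onto total degree j - 1
    set u' := FTproj 𝒱 hinternal (j - 1) u with hu'
    set v' := FTproj 𝒱 hinternal (j - 1) v with hv'
    have hcomm1 : FTproj 𝒱 hinternal j (δ₁ u) = δ₁ u' :=
      FTproj_comm 𝒱 hinternal j δ₁ (fun i => (i.1 + 1, i.2)) (fun i => by show i.1 + 1 + i.2 = i.1 + i.2 + 1; abel)
        (fun i x hx => hδ₁deg i.1 i.2 x hx) u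
    have hcomm2 : FTproj 𝒱 hinternal j (δ₂ v) = δ₂ v' :=
      FTproj_comm 𝒱 hinternal j δ₂ (fun i => (i.1, i.2 + 1)) (fun i => by show i.1 + (i.2 + 1) = i.1 + i.2 + 1; abel)
        (fun i x hx => hδ₂deg i.1 i.2 x hx) v
    have haW : (a : V) ∈ Wj := (Submodule.mem_inf.mp a.2).2
    have hbW : (b : V) ∈ Wj := (Submodule.mem_inf.mp b.2).2
    have heq : (a : V) - (b : V) = δ₁ u' + δ₂ v' := by
      have h := congrArg (FTproj 𝒱 hinternal j) huv
      rw [map_add, hcomm1, hcomm2,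
        FTproj_id 𝒱 hinternal j (Submodule.sub_mem _ haW hbW)] at h
      exact h.symm
    have hd1uW : δ₁ u' ∈ Wj := by
      rw [← hcomm1]
      exact FTproj_mem 𝒱 hinternal j (δ₁ u)
    -- the Bott-Chern representative
    set c : V := (a : V) - δ₁ u' with hc
    have hcb : c = (b : V) + δ₂ v' := by
      rw [hc]
      have : (a : V) = (b : V) + (δ₁ u' + δ₂ v') := by
        rw [← heq]; abel
      rw [this]; abel
    have hck1 : δ₁ c = 0 := by
      rw [hc, map_sub, hsq1]
      have : δ₁ (a : V) = 0 := LinearMap.mem_ker.mp (Submodule.mem_inf.mp a.2).1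
      rw [this, sub_zero]
    have hck2 : δ₂ c = 0 := by
      rw [hcb, map_add, hsq2]
      have : δ₂ (b : V) = 0 := LinearMap.mem_ker.mp (Submodule.mem_inf.mp b.2).1
      rw [this, zero_add]
    have hcW : c ∈ Wj := Submodule.sub_mem _ haW hd1uW
    have hcABC : c ∈ ABC :=
      ⟨⟨LinearMap.mem_ker.mpr hck1, LinearMap.mem_ker.mpr hck2⟩, hcW⟩
    refine ⟨Submodule.Quotient.mk ⟨c, hcABC⟩, ?_⟩
    have hf1 : f1 (Submodule.Quotient.mk ⟨c, hcABC⟩) = Submodule.Quotient.mk a := by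
      simp only [f1, Submodule.mapQ_apply]
      rw [Submodule.Quotient.eq]
      simp only [N1, Submodule.mem_comap, Submodule.coe_subtype,
        AddSubgroupClass.coe_sub, Submodule.coe_inclusion]
      refine ⟨-u', ?_⟩
      rw [map_neg]
      show -δ₁ u' = c - (a : V)
      rw [hc]; abel
    have hf2 : f2 (Submodule.Quotient.mk ⟨c, hcABC⟩) = Submodule.Quotient.mk b := by
      simp only [f2, Submodule.mapQ_apply]
      rw [Submodule.Quotient.eq]
      simp only [N2, Submodule.mem_comap, Submodule.coe_subtype,
        AddSubgroupClass.coe_sub, Submodule.coe_inclusion]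
      refine ⟨v', ?_⟩
      show δ₂ v' = c - (b : V)
      rw [hcb]; abel
    simp only [f, LinearMap.prod_apply, Function.prod, hf1, hf2]
  -- rank counting
  haveI : Module.Free K (↥A1 ⧸ N1) := Module.Free.of_divisionRing K _
  haveI : Module.Free K (↥A2 ⧸ N2) := Module.Free.of_divisionRing K _
  show Module.rank K (↥A1 ⧸ N1) + Module.rank K (↥A2 ⧸ N2) ≤
    Module.rank K (↥ABC ⧸ NBC) + Module.rank K (↥AA ⧸ NA)
  calc Module.rank K (↥A1 ⧸ N1) + Module.rank K (↥A2 ⧸ N2)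
      = Module.rank K ((↥A1 ⧸ N1) × (↥A2 ⧸ N2)) := (rank_prod').symm
    _ = Module.rank K ↥(range g) + Module.rank K ↥(ker g) :=
        (rank_range_add_rank_ker g).symm
    _ ≤ Module.rank K (↥AA ⧸ NA) + Module.rank K (↥ABC ⧸ NBC) :=
        add_le_add ((range g).rank_le)
          ((Submodule.rank_mono hker).trans (rank_range_le f))
    _ = Module.rank K (↥ABC ⧸ NBC) + Module.rank K (↥AA ⧸ NA) := add_comm _ _
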